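/- For every g ∈ Γ one has (t₁t₂)∘g = det(g)⁴ · (t₁t₂). (This is the concrete content of the fact that the restriction to Γ of Sym²T ⊗ (det T)⁻¹ contains the restriction of det(T)³ as a 1-dimensional summand.) -/

import Mathlib

open MvPolynomial

/-- Substitution of a 2×2 matrix into a polynomial in two variables:
`tᵢ ↦ gᵢ₁ t₁ + gᵢ₂ t₂`. -/
noncomputable def bsub (g : Matrix (Fin 2) (Fin 2) ℂ) (p : MvPolynomial (Fin 2) ℂ) :
    MvPolynomial (Fin 2) ℂ :=
  aeval (fun i => C (g i 0) * X 0 + C (g i 1) * X 1) p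

lemma bsub_one (p : MvPolynomial (Fin 2) ℂ) : bsub 1 p = p := by
  have : (fun i => C ((1 : Matrix (Fin 2) (Fin 2) ℂ) i 0) * X 0
      + C ((1 : Matrix (Fin 2) (Fin 2) ℂ) i 1) * X 1) = (X : Fin 2 → MvPolynomial (Fin 2) ℂ) := by
    funext i
    fin_cases i <;> simp [Matrix.one_apply]
  rw [bsub, this, aeval_X_left_apply]

lemma bsub_mul (g h : Matrix (Fin 2) (Fin 2) ℂ) (p : MvPolynomial (Fin 2) ℂ) :
    bsub (g * h) p = bsub h (bsub g p) := by
  unfold bsub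
  rw [← AlgHom.comp_apply]
  refine DFunLike.congr_fun ?_ p
  apply algHom_ext
  intro i
  simp [Matrix.mul_apply, Fin.sum_univ_two]
  ring

/-- The binary cubic `t₁³ + t₂³`. -/
noncomputable def cubicDiag : MvPolynomial (Fin 2) ℂ := X 0 ^ 3 + X 1 ^ 3

/-- The stabilizer `Γ` of the binary cubic `t₁³ + t₂³` in `GL₂(ℂ)`. -/
noncomputable def Gamma : Subgroup (GL (Fin 2) ℂ) where
  carrier := {g | bsub (↑g) cubicDiag = cubicDiag}
  one_mem' := bsub_one _
  mul_mem' := by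
    intro g h hg hh
    show bsub (↑(g * h)) cubicDiag = cubicDiag
    rw [Units.val_mul, bsub_mul, hg, hh]
  inv_mem' := by
    intro g hg
    show bsub (↑g⁻¹) cubicDiag = cubicDiag
    have hg' : bsub (↑g) cubicDiag = cubicDiag := hg
    have h1 : bsub ((↑g : Matrix (Fin 2) (Fin 2) ℂ) * (↑g⁻¹ : Matrix (Fin 2) (Fin 2) ℂ)) cubicDiag
        = bsub (↑g⁻¹ : Matrix (Fin 2) (Fin 2) ℂ) cubicDiag := by
      rw [bsub_mul, hg']
    have h2 : (↑g : Matrix (Fin 2) (Fin 2) ℂ) * (↑g⁻¹ : Matrix (Fin 2) (Fin 2) ℂ) = 1 := by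
      rw [← Units.val_mul, mul_inv_cancel, Units.val_one]
    rw [← h1, h2, bsub_one]

/-- For every `g ∈ Γ`, the substitution action of `g` on `t₁t₂` is
multiplication by `det(g)⁴`. -/
theorem gamma_acts_on_t1t2 :
    ∀ g : GL (Fin 2) ℂ, g ∈ Gamma →
      bsub (↑g) (X 0 * X 1) =
        C ((↑g : Matrix (Fin 2) (Fin 2) ℂ).det ^ 4) * (X 0 * X 1) := by
  intro g hg
  set M : Matrix (Fin 2) (Fin 2) ℂ := (↑g : Matrix (Fin 2) (Fin 2) ℂ) with hM
  set a := M 0 0 with ha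
  set b := M 0 1 with hb
  set c := M 1 0 with hc
  set d := M 1 1 with hd
  have hg' : bsub M cubicDiag = cubicDiag := hg
  have E : ∀ x y : ℂ, (a*x + b*y)^3 + (c*x + d*y)^3 = x^3 + y^3 := by
    intro x y
    have := congrArg (eval ![x, y]) hg'
    simpa [bsub, cubicDiag, ← ha, ← hb, ← hc, ← hd] using this
  have s1 : a^3 + c^3 = 1 := by linear_combination E 1 0
  have s2 : b^3 + d^3 = 1 := by linear_combination E 0 1
  have s3 : a^2*b + c^2*d = 0 := by
    linear_combination (E 1 1)/6 - (E 1 (-1))/6 - (E 0 1)/3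
  have s4 : a*b^2 + c*d^2 = 0 := by
    linear_combination (E 1 1)/6 + (E 1 (-1))/6 - (E 1 0)/3
  have hdetM : M.det = a*d - b*c := by
    rw [Matrix.det_fin_two]
  have hdet0 : a*d - b*c ≠ 0 := by
    rw [← hdetM]
    exact ((Matrix.isUnit_iff_isUnit_det M).mp g.isUnit).ne_zero
  -- key algebraic facts
  have key : a*c = 0 ∧ b*d = 0 ∧ a*d + b*c = (a*d - b*c)^4 := by
    by_cases hA : a = 0
    · have hc3 : c^3 = 1 := by linear_combination s1 - hA * (a^2)
      have hcne : c ≠ 0 := by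
        intro h0; rw [h0] at hc3; norm_num at hc3
      have hD : d = 0 := by
        have : c^2 * d = 0 := by linear_combination s3 - (a*b)*hA
        have := mul_eq_zero.mp this
        rcases this with h | h
        · exact absurd (pow_eq_zero_iff (by norm_num)|>.mp h) hcne
        · exact h
      have hb3 : b^3 = 1 := by linear_combination s2 - d^2 * hD
      refine ⟨by rw [hA, zero_mul], by rw [hD, mul_zero], ?_⟩
      rw [hA, hD]
      linear_combination -(b*c^4)*hb3 - (b*c)*hc3
    · by_cases hB : b = 0
      · have ha3 : a^3 = 1 := by
          have hd3 : d^3 = 1 := by linear_combination s2 - hB*b^2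
          have hdne : d ≠ 0 := by
            intro h0; rw [h0] at hd3; norm_num at hd3
          have hC : c = 0 := by
            have : c * d^2 = 0 := by linear_combination s4 - (a*b)*hB
            rcases mul_eq_zero.mp this with h | h
            · exact h
            · exact absurd (pow_eq_zero_iff (by norm_num)|>.mp h) hdne
          linear_combination s1 - c^2 * hC
        have hd3 : d^3 = 1 := by linear_combination s2 - hB*b^2
        have hdne : d ≠ 0 := by
          intro h0; rw [h0] at hd3; norm_num at hd3
        have hC : c = 0 := by
          have : c * d^2 = 0 := by linear_combination s4 - (a*b)*hB
          rcases mul_eq_zero.mp this with h | h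
          · exact h
          · exact absurd (pow_eq_zero_iff (by norm_num)|>.mp h) hdne
        refine ⟨by rw [hC, mul_zero], by rw [hB, zero_mul], ?_⟩
        rw [hB, hC]
        linear_combination -(a*d^4)*ha3 - (a*d)*hd3
      · exfalso
        have : a * b * (a*d - b*c) = 0 := by linear_combination d * s3 - c * s4
        rcases mul_eq_zero.mp this with h | h
        · rcases mul_eq_zero.mp h with h | h
          · exact hA h
          · exact hB h
        · exact hdet0 h
  obtain ⟨hac, hbd, had⟩ := key
  have hC1 : (C a : MvPolynomial (Fin 2) ℂ) * C c = 0 := by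
    rw [← C_mul, hac, C_0]
  have hC2 : (C b : MvPolynomial (Fin 2) ℂ) * C d = 0 := by
    rw [← C_mul, hbd, C_0]
  have hC3 : (C a : MvPolynomial (Fin 2) ℂ) * C d + C b * C c = C ((a*d - b*c)^4) := by
    rw [← C_mul, ← C_mul, ← C_add, had]
  rw [hdetM]
  show aeval (fun i => C (M i 0) * X 0 + C (M i 1) * X 1) (X 0 * X 1) = _
  rw [map_mul, aeval_X, aeval_X]
  show (C a * X 0 + C b * X 1) * (C c * X 0 + C d * X 1) = _
  linear_combination (X 0 : MvPolynomial (Fin 2) ℂ)^2 * hC1 + (X 1 : MvPolynomial (Fin 2) ℂ)^2 * hC2 + ((X 0 : MvPolynomial (Fin 2) ℂ) * X 1) * hC3
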